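/- For constants C1 ≠ 0, C2, C3 with C2² + C3² ≠ 0, the nilpotent geodesic x(t) = (1/C1)(C3 - C2 sin(C1 t) - C3 cos(C1 t)), θ(t) = (1/C1)(C2 - C2 cos(C1 t) + C3 sin(C1 t)) satisfies x(t) = θ(t) = 0 if and only if C1 t ∈ 2πℤ; in particular, the first positive time at which x(t) = θ(t) = 0 is t = 2π/|C1|. -/
import Mathlib


open Real

/-- For `C1 ≠ 0`, `(C2, C3) ≠ (0,0)`, the nilpotent geodesic components
`x(t) = (1/C1)(C3 - C2 sin(C1 t) - C3 cos(C1 t))`,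
`θ(t) = (1/C1)(C2 - C2 cos(C1 t) + C3 sin(C1 t))` vanish simultaneously iff
`C1 t ∈ 2πℤ`; in particular the first positive such time is `t = 2π/|C1|`. -/
theorem geodesic_return_times (C1 C2 C3 : ℝ) (hC1 : C1 ≠ 0)
    (hC23 : C2 ^ 2 + C3 ^ 2 ≠ 0) :
    let x : ℝ → ℝ := fun t => (1 / C1) * (C3 - C2 * sin (C1 * t) - C3 * cos (C1 * t))
    let θ : ℝ → ℝ := fun t => (1 / C1) * (C2 - C2 * cos (C1 * t) + C3 * sin (C1 * t))
    (∀ t : ℝ, (x t = 0 ∧ θ t = 0) ↔ ∃ k : ℤ, C1 * t = 2 * π * k) ∧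
    (x (2 * π / |C1|) = 0 ∧ θ (2 * π / |C1|) = 0) ∧
    (∀ t : ℝ, 0 < t → x t = 0 → θ t = 0 → 2 * π / |C1| ≤ t) := by
  intro x θ
  have key : ∀ t : ℝ, (x t = 0 ∧ θ t = 0) ↔ ∃ k : ℤ, C1 * t = 2 * π * k := by
    intro t
    constructor
    · rintro ⟨hx, hθ⟩
      simp only [x, θ, one_div, mul_eq_zero, inv_eq_zero, hC1, false_or] at hx hθ
      have hs : (C2 ^ 2 + C3 ^ 2) * sin (C1 * t) = 0 := by
        linear_combination (-C2) * hx + C3 * hθ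
      have hc : (C2 ^ 2 + C3 ^ 2) * (cos (C1 * t) - 1) = 0 := by
        linear_combination (-C3) * hx + (-C2) * hθ
      have hc1 : cos (C1 * t) = 1 := by
        rcases mul_eq_zero.1 hc with h | h
        · exact absurd h hC23
        · linarith
      obtain ⟨n, hn⟩ := (Real.cos_eq_one_iff _).1 hc1
      exact ⟨n, by linarith [hn]⟩
    · rintro ⟨k, hk⟩
      have hc : cos (C1 * t) = 1 := by
        rw [hk]
        have : (2 : ℝ) * π * k = k * (2 * π) := by ring
        rw [this, Real.cos_int_mul_two_pi]
      have hs : sin (C1 * t) = 0 := by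
        have := sin_sq_add_cos_sq (C1 * t)
        nlinarith
      constructor <;> simp [x, θ, hs, hc]
  refine ⟨key, ?_, ?_⟩
  · rw [key]
    rcases abs_cases C1 with ⟨h, _⟩ | ⟨h, _⟩
    · refine ⟨1, by rw [h]; push_cast; rw [mul_div_cancel₀ _ hC1]; ring⟩
    · refine ⟨-1, ?_⟩
      rw [h]
      push_cast
      rw [div_neg, mul_neg, mul_div_cancel₀ _ hC1]
      ring
  · intro t ht hx hθ
    obtain ⟨k, hk⟩ := (key t).1 ⟨hx, hθ⟩
    have habs : |C1| * t = 2 * π * |(k : ℝ)| := by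
      have h := congrArg abs hk
      rw [abs_mul, abs_mul, abs_mul, abs_two, abs_of_pos pi_pos, abs_of_pos ht] at h
      exact h
    have hk0 : k ≠ 0 := by
      rintro rfl
      simp at hk
      rcases hk with h | h
      · exact hC1 h
      · exact ht.ne' h
    have h1 : (1 : ℝ) ≤ |(k : ℝ)| := by
      rw [← Int.cast_abs]
      exact_mod_cast Int.one_le_abs (by omega)
    have hC1' : 0 < |C1| := abs_pos.2 hC1
    rw [div_le_iff₀ hC1', mul_comm t |C1|, habs]
    nlinarith [pi_pos]
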